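/- Let A, X be SPD, R ∈ ℝ^{n_c×n} and S ∈ ℝ^{n×n_f} (n_f = n - n_c) full rank with RS = 0. For P_id = (I - S(SᵀAS)⁻¹SᵀA)Z with Z full rank and RZ = I, the minimum over all P with RP = I of sup_v ‖(I-PR)v‖²_X/‖v‖²_A equals 1/λ_min((SᵀXS)⁻¹(SᵀAS)). -/

import Mathlib

open Matrix

private lemma dp1 {a b : ℕ} (M : Matrix (Fin a) (Fin b) ℝ) (x : Fin b → ℝ) (y : Fin a → ℝ) :
    (M *ᵥ x) ⬝ᵥ y = x ⬝ᵥ (Mᵀ *ᵥ y) := by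
  rw [dotProduct_comm, dotProduct_mulVec, ← mulVec_transpose]
  exact dotProduct_comm _ _

private lemma inj_of_rank {k l : ℕ} (S : Matrix (Fin k) (Fin l) ℝ)
    (hS : S.rank = l) : ∀ x : Fin l → ℝ, S *ᵥ x = 0 → x = 0 := by
  have h1 := LinearMap.finrank_range_add_finrank_ker S.mulVecLin
  simp only [Module.finrank_pi, Fintype.card_fin] at h1
  have h2 : Module.finrank ℝ (LinearMap.ker S.mulVecLin) = 0 := by
    have : S.rank = Module.finrank ℝ (LinearMap.range S.mulVecLin) := rfl
    omega
  have h3 : LinearMap.ker S.mulVecLin = ⊥ := Submodule.finrank_eq_zero.mp h2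
  intro x hx
  have : x ∈ LinearMap.ker S.mulVecLin := by simpa [LinearMap.mem_ker, mulVecLin_apply] using hx
  simpa [h3] using this

private lemma ker_sub_range {n nc nf : ℕ} (h : nc + nf = n)
    (R : Matrix (Fin nc) (Fin n) ℝ) (hR : R.rank = nc)
    (S : Matrix (Fin n) (Fin nf) ℝ) (hS : S.rank = nf) (hRS : R * S = 0)
    (x : Fin n → ℝ) (hx : R *ᵥ x = 0) : ∃ t, S *ᵥ t = x := by
  have hle : LinearMap.range S.mulVecLin ≤ LinearMap.ker R.mulVecLin := by
    rintro _ ⟨t, rfl⟩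
    simp only [LinearMap.mem_ker, mulVecLin_apply, mulVec_mulVec, hRS, zero_mulVec]
  have h1 := LinearMap.finrank_range_add_finrank_ker R.mulVecLin
  simp only [Module.finrank_pi, Fintype.card_fin] at h1
  have hRr : Module.finrank ℝ (LinearMap.range R.mulVecLin) = nc := hR
  have hSr : Module.finrank ℝ (LinearMap.range S.mulVecLin) = nf := hS
  have heq : LinearMap.range S.mulVecLin = LinearMap.ker R.mulVecLin := by
    apply Submodule.eq_of_le_of_finrank_le hle
    omega
  have : x ∈ LinearMap.range S.mulVecLin := by
    rw [heq]; simpa [LinearMap.mem_ker, mulVecLin_apply] using hx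
  obtain ⟨t, ht⟩ := this
  exact ⟨t, ht⟩

private lemma posDef_conj {k l : ℕ} {A : Matrix (Fin k) (Fin k) ℝ} (hA : A.PosDef)
    (S : Matrix (Fin k) (Fin l) ℝ) (hS : S.rank = l) : (Sᵀ * A * S).PosDef := by
  refine Matrix.PosDef.of_dotProduct_mulVec_pos ?_ ?_
  · have := isHermitian_conjTranspose_mul_mul S hA.1
    simpa [conjTranspose_eq_transpose_of_trivial] using this
  · intro x hx
    have hSx : S *ᵥ x ≠ 0 := fun hz => hx (inj_of_rank S hS x hz)
    have := hA.dotProduct_mulVec_pos hSx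
    simp only [star_trivial] at this ⊢
    calc x ⬝ᵥ (Sᵀ * A * S) *ᵥ x = x ⬝ᵥ (Sᵀ *ᵥ (A *ᵥ (S *ᵥ x))) := by
          rw [mulVec_mulVec, mulVec_mulVec]
      _ = (S *ᵥ x) ⬝ᵥ (A *ᵥ (S *ᵥ x)) := by
          exact (dp1 S x _).symm
      _ > 0 := this
open scoped MatrixOrder in
private lemma rayleigh_lower {m : ℕ} {B C : Matrix (Fin m) (Fin m) ℝ}
    (hB : B.PosDef) (hC : C.PosDef) (lmin : ℝ)
    (hl : ∀ μ : ℝ, (∃ w : Fin m → ℝ, w ≠ 0 ∧ C *ᵥ w = μ • (B *ᵥ w)) → lmin ≤ μ) :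
    ∀ w : Fin m → ℝ, lmin * (w ⬝ᵥ B *ᵥ w) ≤ w ⬝ᵥ C *ᵥ w := by
  set T := CFC.sqrt B with hTdef
  have hT : T.PosSemidef := (CFC.sqrt_nonneg B).posSemidef
  have hTT : T * T = B := CFC.sqrt_mul_sqrt_self B hB.posSemidef.nonneg
  have hTher : Tᵀ = T := by
    have := hT.1.eq
    rwa [conjTranspose_eq_transpose_of_trivial] at this
  have hdet : IsUnit T.det := by
    have hBdet : 0 < B.det := hB.det_pos
    rw [← hTT, det_mul] at hBdet
    have : T.det ≠ 0 := by intro h0; rw [h0] at hBdet; simpa using hBdet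
    exact isUnit_iff_ne_zero.mpr this
  have hTiT : T⁻¹ * T = 1 := nonsing_inv_mul T hdet
  have hTTi : T * T⁻¹ = 1 := mul_nonsing_inv T hdet
  have hTiher : (T⁻¹)ᵀ = T⁻¹ := by rw [transpose_nonsing_inv, hTher]
  set M := T⁻¹ * C * T⁻¹ with hMdef
  -- every (classical) eigenvalue of M is ≥ lmin
  have key : ∀ (c : ℝ) (y : Fin m → ℝ), y ≠ 0 → M *ᵥ y = c • y → lmin ≤ c := by
    intro c y hy hMy
    have hyw : y = T *ᵥ (T⁻¹ *ᵥ y) := by rw [mulVec_mulVec, hTTi, one_mulVec]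
    set w := T⁻¹ *ᵥ y with hwdef
    have hw : w ≠ 0 := by
      intro h0
      apply hy
      rw [hyw, h0, mulVec_zero]
    apply hl c ⟨w, hw, ?_⟩
    have h1 : T *ᵥ (M *ᵥ y) = C *ᵥ w := by
      rw [mulVec_mulVec, hMdef, ← mul_assoc, ← mul_assoc, hTTi, one_mul, ← mulVec_mulVec]
    have h2 : T *ᵥ (c • y) = c • (B *ᵥ w) := by
      rw [mulVec_smul]
      congr 1
      rw [hyw, mulVec_mulVec, hTT]
    rw [← h1, ← h2, hMy]
  -- M - lmin • 1 is pos semidef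
  have hMher : M.IsHermitian := by
    have := isHermitian_conjTranspose_mul_mul T⁻¹ hC.1
    rw [conjTranspose_eq_transpose_of_trivial, hTiher] at this
    exact this
  have hM'her : (M - lmin • 1).IsHermitian := by
    have hMt : Mᵀ = M := by
      have := hMher.eq
      rwa [conjTranspose_eq_transpose_of_trivial] at this
    simp [Matrix.IsHermitian, conjTranspose_sub, conjTranspose_smul, hMt]
  have hpsd : (M - lmin • 1).PosSemidef := by
    apply hM'her.posSemidef_iff_eigenvalues_nonneg.mpr
    intro i
    set y : Fin m → ℝ := ⇑(hM'her.eigenvectorBasis i) with hydef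
    have hyev : (M - lmin • 1) *ᵥ y = hM'her.eigenvalues i • y :=
      hM'her.mulVec_eigenvectorBasis i
    have hyne : y ≠ 0 := by
      intro h0
      have : hM'her.eigenvectorBasis i = 0 := by
        ext j
        exact congrFun h0 j
      exact hM'her.eigenvectorBasis.toBasis.ne_zero i (by simpa using this)
    have hMy : M *ᵥ y = (hM'her.eigenvalues i + lmin) • y := by
      have : M *ᵥ y - lmin • y = hM'her.eigenvalues i • y := by
        rw [← hyev, sub_mulVec, smul_mulVec, one_mulVec]
      have := congrArg (· + lmin • y) this
      simpa [add_smul, sub_add_cancel] using this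
    have := key _ y hyne hMy
    rw [Pi.zero_apply]
    linarith
  intro w
  set z := T *ᵥ w with hzdef
  have h0 := hpsd.dotProduct_mulVec_nonneg z
  simp only [star_trivial] at h0
  have hz1 : z ⬝ᵥ z = w ⬝ᵥ B *ᵥ w := by
    rw [hzdef, dp1, hTher, mulVec_mulVec, hTT]
  have hz2 : z ⬝ᵥ M *ᵥ z = w ⬝ᵥ C *ᵥ w := by
    have hMz : M *ᵥ z = T⁻¹ *ᵥ (C *ᵥ w) := by
      rw [hzdef, mulVec_mulVec, hMdef, mul_assoc, hTiT, mul_one, ← mulVec_mulVec]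
    rw [hMz, hzdef, dp1, hTher, mulVec_mulVec, hTTi, one_mulVec]
  have : z ⬝ᵥ (M - lmin • 1) *ᵥ z = z ⬝ᵥ M *ᵥ z - lmin * (z ⬝ᵥ z) := by
    rw [sub_mulVec, dotProduct_sub, smul_mulVec, one_mulVec, dotProduct_smul, smul_eq_mul]
  rw [this] at h0
  rw [← hz1, ← hz2]
  linarith

/-- The minimum over all `P` with `RP = I` of `μ_X(PR) = sup_v ‖(I-PR)v‖²_X/‖v‖²_A`
equals `1/λ_min((SᵀXS)⁻¹(SᵀAS))`, attained by the ideal interpolation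
`P_id = (I - S(SᵀAS)⁻¹SᵀA)Z` with `RZ = I`. -/
theorem ideal_interpolation_minimizes_measure {n nc nf : ℕ} (h : nc + nf = n)
    (A X : Matrix (Fin n) (Fin n) ℝ) (hA : A.PosDef) (hX : X.PosDef)
    (R : Matrix (Fin nc) (Fin n) ℝ) (hR : R.rank = nc)
    (S : Matrix (Fin n) (Fin nf) ℝ) (hSrank : S.rank = nf) (hRS : R * S = 0)
    (lmin : ℝ)
    (hlmin : IsLeast {μ : ℝ | ∃ w : Fin nf → ℝ, w ≠ 0 ∧
      (Sᵀ * A * S).mulVec w = μ • (Sᵀ * X * S).mulVec w} lmin)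
    (Z : Matrix (Fin n) (Fin nc) ℝ) (hZ : Z.rank = nc) (hRZ : R * Z = 1) :
    (∀ v : Fin n → ℝ, v ≠ 0 →
      (((1 - ((1 - S * (Sᵀ * A * S)⁻¹ * Sᵀ * A) * Z) * R).mulVec v) ⬝ᵥ
          X.mulVec ((1 - ((1 - S * (Sᵀ * A * S)⁻¹ * Sᵀ * A) * Z) * R).mulVec v)) /
        (v ⬝ᵥ A.mulVec v) ≤ 1 / lmin) ∧
    (∀ P : Matrix (Fin n) (Fin nc) ℝ, R * P = 1 →
      ∃ v : Fin n → ℝ, v ≠ 0 ∧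
        1 / lmin ≤ (((1 - P * R).mulVec v) ⬝ᵥ
            X.mulVec ((1 - P * R).mulVec v)) / (v ⬝ᵥ A.mulVec v)) := by
  set C := Sᵀ * A * S with hCdef
  set B := Sᵀ * X * S with hBdef
  have hCpd : C.PosDef := posDef_conj hA S hSrank
  have hBpd : B.PosDef := posDef_conj hX S hSrank
  have hCdet : IsUnit C.det := isUnit_iff_ne_zero.mpr (ne_of_gt hCpd.det_pos)
  have hNC : C⁻¹ * C = 1 := nonsing_inv_mul C hCdet
  have hCN : C * C⁻¹ = 1 := mul_nonsing_inv C hCdet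
  obtain ⟨w0, hw0, hw0eq⟩ := hlmin.1
  have hBw0 : 0 < w0 ⬝ᵥ B *ᵥ w0 := by simpa [star_trivial] using hBpd.dotProduct_mulVec_pos hw0
  have hCw0 : 0 < w0 ⬝ᵥ C *ᵥ w0 := by simpa [star_trivial] using hCpd.dotProduct_mulVec_pos hw0
  have hCw0' : w0 ⬝ᵥ C *ᵥ w0 = lmin * (w0 ⬝ᵥ B *ᵥ w0) := by
    rw [hw0eq, dotProduct_smul, smul_eq_mul]
  have hlpos : 0 < lmin := by nlinarith
  have hray := rayleigh_lower hBpd hCpd lmin (fun μ hμ => hlmin.2 hμ)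
  constructor
  · intro v hv
    have hvA : 0 < v ⬝ᵥ A *ᵥ v := by simpa [star_trivial] using hA.dotProduct_mulVec_pos hv
    set u : Fin nf → ℝ := C⁻¹ *ᵥ ((Sᵀ * A) *ᵥ v) with hudef
    set e : Fin n → ℝ := S *ᵥ u with hedef
    have hRW : R * (1 - Z * R) = 0 := by
      rw [Matrix.mul_sub, Matrix.mul_one, ← Matrix.mul_assoc, hRZ, Matrix.one_mul, sub_self]
    obtain ⟨t, ht⟩ := ker_sub_range h R hR S hSrank hRS ((1 - Z * R) *ᵥ v)
      (by rw [mulVec_mulVec, hRW, zero_mulVec])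
    have hQS : (S * C⁻¹ * Sᵀ * A) * S = S := by
      have h1 : (S * C⁻¹ * Sᵀ * A) * S = S * C⁻¹ * (Sᵀ * A * S) := by
        simp only [Matrix.mul_assoc]
      rw [h1, ← hCdef, Matrix.mul_assoc, hNC, Matrix.mul_one]
    have hQv : (S * C⁻¹ * Sᵀ * A) *ᵥ v
        = (1 - Z * R) *ᵥ v + (S * C⁻¹ * Sᵀ * A) *ᵥ ((Z * R) *ᵥ v) := by
      conv_lhs => rw [show v = (1 - Z * R) *ᵥ v + (Z * R) *ᵥ v from by
        rw [sub_mulVec, one_mulVec, sub_add_cancel]]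
      rw [mulVec_add, ← ht, mulVec_mulVec, hQS, ht]
    have he : (1 - ((1 - S * C⁻¹ * Sᵀ * A) * Z) * R) *ᵥ v = e := by
      have hMat : 1 - ((1 - S * C⁻¹ * Sᵀ * A) * Z) * R
          = (1 - Z * R) + (S * C⁻¹ * Sᵀ * A) * (Z * R) := by
        rw [Matrix.sub_mul, Matrix.one_mul, Matrix.sub_mul, Matrix.mul_assoc]
        abel
      rw [hMat, add_mulVec, ← mulVec_mulVec, ← hQv, hedef, hudef,
        mulVec_mulVec, mulVec_mulVec]
      simp only [Matrix.mul_assoc]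

    have hnum : e ⬝ᵥ X *ᵥ e = u ⬝ᵥ B *ᵥ u := by
      rw [hedef, dp1, mulVec_mulVec, mulVec_mulVec, ← hBdef]
    have hCu : C *ᵥ u = (Sᵀ * A) *ᵥ v := by
      rw [hudef, mulVec_mulVec, hCN, one_mulVec]
    have heAe : e ⬝ᵥ A *ᵥ e = u ⬝ᵥ C *ᵥ u := by
      rw [hedef, dp1, mulVec_mulVec, mulVec_mulVec, ← hCdef]
    have heAv : e ⬝ᵥ A *ᵥ v = u ⬝ᵥ C *ᵥ u := by
      rw [hedef, dp1, mulVec_mulVec, ← hCu]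
    have hAsym : Aᵀ = A := by
      have := hA.1.eq
      rwa [conjTranspose_eq_transpose_of_trivial] at this
    have hcross1 : e ⬝ᵥ A *ᵥ (v - e) = 0 := by
      rw [mulVec_sub, dotProduct_sub, heAv, heAe, sub_self]
    have hcross2 : (v - e) ⬝ᵥ A *ᵥ e = 0 := by
      rw [dotProduct_comm, dp1, hAsym, hcross1]
    have hsplit : v ⬝ᵥ A *ᵥ v = u ⬝ᵥ C *ᵥ u + (v - e) ⬝ᵥ A *ᵥ (v - e) := by
      have hv' : v = e + (v - e) := by rw [add_comm, sub_add_cancel]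
      conv_lhs => rw [hv']
      rw [add_dotProduct, mulVec_add, dotProduct_add, dotProduct_add, heAe, hcross1, hcross2]
      ring
    have hG : 0 ≤ (v - e) ⬝ᵥ A *ᵥ (v - e) := by
      simpa [star_trivial] using hA.posSemidef.dotProduct_mulVec_nonneg (v - e)
    have h0B : 0 ≤ u ⬝ᵥ B *ᵥ u := by simpa [star_trivial] using hBpd.posSemidef.dotProduct_mulVec_nonneg u
    have hle1 := hray u

    rw [he, hnum, div_le_div_iff₀ hvA hlpos]
    nlinarith
  · intro P hP
    refine ⟨S *ᵥ w0, fun h0 => hw0 (inj_of_rank S hSrank w0 h0), ?_⟩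
    have hfix : (1 - P * R) *ᵥ (S *ᵥ w0) = S *ᵥ w0 := by
      rw [sub_mulVec, one_mulVec, mulVec_mulVec, Matrix.mul_assoc, hRS, Matrix.mul_zero,
        zero_mulVec, sub_zero]
    have hXq : (S *ᵥ w0) ⬝ᵥ X *ᵥ (S *ᵥ w0) = w0 ⬝ᵥ B *ᵥ w0 := by
      rw [dp1, mulVec_mulVec, mulVec_mulVec, ← hBdef]
    have hAq : (S *ᵥ w0) ⬝ᵥ A *ᵥ (S *ᵥ w0) = lmin * (w0 ⬝ᵥ B *ᵥ w0) := by
      rw [dp1, mulVec_mulVec, mulVec_mulVec, ← hCdef, hCw0']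
    rw [hfix, hXq, hAq]
    rw [mul_comm, ← div_div, div_self (ne_of_gt hBw0)]
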